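/- arXiv:1512.02615 — 2 statements merged into one kernel-verified Lean document; each statement's English description precedes it below -/
import Mathlib

section
/- For α ∈ (0,1) and positive definite ρ (tr ρ = 1) and σ, the quantity Q_α^P(ρ||σ) = inf over rank-1 projective measurements {P_i} of Σ_i tr[P_i ρ]^α tr[P_i σ]^{1−α} equals inf_{ω>0} α tr[ρ ω] + (1−α) tr[σ ω^{α/(α−1)}]. -/
open Matrix
open scoped ComplexOrder

noncomputable def mlog {d : ℕ} (A : Matrix (Fin d) (Fin d) ℂ) : Matrix (Fin d) (Fin d) ℂ :=
  cfc (R := ℝ) Real.log A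

noncomputable def mpow {d : ℕ} (A : Matrix (Fin d) (Fin d) ℂ) (p : ℝ) : Matrix (Fin d) (Fin d) ℂ :=
  cfc (R := ℝ) (fun t : ℝ => t ^ p) A

noncomputable def mexp {d : ℕ} (A : Matrix (Fin d) (Fin d) ℂ) : Matrix (Fin d) (Fin d) ℂ :=
  NormedSpace.exp A

/-- Kullback-Leibler divergence with the convention that terms with `P x = 0` contribute `0`. -/
noncomputable def KL {X : Type*} [Fintype X] (P Q : X → ℝ) : ℝ :=
  ∑ x, if P x = 0 then 0 else P x * Real.log (P x / Q x)

/-- A rank-one projective measurement: mutually orthogonal rank-1 projectors summing to 1. -/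
def IsRankOneProjMeas {d : ℕ} (P : Fin d → Matrix (Fin d) (Fin d) ℂ) : Prop :=
  (∀ i, (P i).IsHermitian) ∧ (∀ i j, P i * P j = if i = j then P i else 0) ∧
    (∑ i, P i = 1) ∧ (∀ i, (P i).rank = 1)


section Aux
variable {d : ℕ}


lemma psd_trace_re_nonneg {A : Matrix (Fin d) (Fin d) ℂ} (hA : A.PosSemidef) :
    0 ≤ A.trace.re := by
  have h : ∀ i, 0 ≤ (A i i).re := by
    intro i
    have := hA.re_dotProduct_nonneg (Pi.single i 1)
    simpa [dotProduct, mulVec, Pi.single_apply, Finset.sum_ite_eq, mul_comm] using this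
  simp only [Matrix.trace, Matrix.diag, Complex.re_sum]
  exact Finset.sum_nonneg fun i _ => h i

open scoped MatrixOrder in
lemma psd_mul_trace_re_nonneg {A B : Matrix (Fin d) (Fin d) ℂ} (hA : A.PosSemidef)
    (hB : B.PosSemidef) : 0 ≤ (A * B).trace.re := by
  classical
  have hS := CFC.sqrt_mul_sqrt_self A hA.nonneg
  set S := CFC.sqrt A with hSdef
  have hSH : Sᴴ = S := (CFC.sqrt_nonneg A).posSemidef.isHermitian
  have h1 : (A * B).trace = (S * B * S).trace := by
    rw [← hS, trace_mul_comm, trace_mul_cycle S B S, trace_mul_comm]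
  have h2 : (S * B * S).PosSemidef := by
    have := hB.conjTranspose_mul_mul_same S
    rwa [hSH] at this
  rw [h1]; exact psd_trace_re_nonneg h2

lemma proj_posSemidef {P : Matrix (Fin d) (Fin d) ℂ} (hH : P.IsHermitian) (hidem : P * P = P) :
    P.PosSemidef := by
  have := posSemidef_conjTranspose_mul_self P
  rwa [hH.eq, hidem] at this

lemma trace_entrywise_self_re_pos {B : Matrix (Fin d) (Fin d) ℂ} (hB : B ≠ 0) :
    0 < (B * Bᴴ).trace.re := by
  classical
  have hdiag : ∀ i, ((B * Bᴴ) i i).re = ∑ j, Complex.normSq (B i j) := by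
    intro i
    simp [Matrix.mul_apply, Matrix.conjTranspose_apply, Complex.re_sum, Complex.mul_conj,
      Complex.normSq]
  have : (B * Bᴴ).trace.re = ∑ i, ∑ j, Complex.normSq (B i j) := by
    simp only [Matrix.trace, Matrix.diag, Complex.re_sum]
    exact Finset.sum_congr rfl fun i _ => hdiag i
  rw [this]
  obtain ⟨i, j, hij⟩ : ∃ i j, B i j ≠ 0 := by
    by_contra h
    push_neg at h
    exact hB (by ext i j; simpa using h i j)
  have hpos : 0 < Complex.normSq (B i j) := Complex.normSq_pos.mpr hij
  have : (0:ℝ) < ∑ j', Complex.normSq (B i j') :=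
    Finset.sum_pos' (fun k _ => Complex.normSq_nonneg _) ⟨j, Finset.mem_univ j, hpos⟩
  exact Finset.sum_pos' (fun k _ => Finset.sum_nonneg fun l _ => Complex.normSq_nonneg _)
    ⟨i, Finset.mem_univ i, this⟩

open scoped MatrixOrder in
lemma proj_mul_posdef_trace_re_pos {P ρ : Matrix (Fin d) (Fin d) ℂ} (hH : P.IsHermitian)
    (hidem : P * P = P) (hPne : P ≠ 0) (hρ : ρ.PosDef) : 0 < (P * ρ).trace.re := by
  classical
  have hS := CFC.sqrt_mul_sqrt_self ρ hρ.posSemidef.nonneg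
  set S := CFC.sqrt ρ with hSdef
  have hSH : Sᴴ = S := (CFC.sqrt_nonneg ρ).posSemidef.isHermitian
  set B := P * S with hBdef
  have hBBH : B * Bᴴ = P * ρ * P := by
    rw [hBdef, Matrix.conjTranspose_mul, hSH, hH.eq, ← hS]
    noncomm_ring
  have htr : (P * ρ).trace = (B * Bᴴ).trace := by
    rw [hBBH, trace_mul_cycle P ρ P, hidem]
  have hBne : B ≠ 0 := by
    intro h0
    apply hPne
    have hρS : P * ρ = 0 := by rw [← hS, ← mul_assoc, ← hBdef, h0, Matrix.zero_mul]
    have hinv : IsUnit ρ.det := (Matrix.isUnit_iff_isUnit_det ρ).mp hρ.isUnit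
    calc P = P * ρ * ρ⁻¹ := by rw [Matrix.mul_nonsing_inv_cancel_right _ _ hinv]
    _ = 0 := by rw [hρS, Matrix.zero_mul]
  rw [htr]
  exact trace_entrywise_self_re_pos hBne


lemma sum_smul_proj_mul_sum_smul_proj (P : Fin d → Matrix (Fin d) (Fin d) ℂ)
    (horth : ∀ i j, P i * P j = if i = j then P i else 0) (a b : Fin d → ℝ) :
    (∑ i, a i • P i) * (∑ j, b j • P j) = ∑ i, (a i * b i) • P i := by
  rw [Finset.sum_mul_sum]
  have h : ∀ i j, (a i • P i) * (b j • P j) = (a i * b j) • (P i * P j) := by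
    intro i j
    rw [Matrix.smul_mul, Matrix.mul_smul, smul_smul]
  refine Finset.sum_congr rfl fun i _ => ?_
  rw [Finset.sum_congr rfl fun j _ => h i j]
  rw [Finset.sum_congr rfl fun j (_ : j ∈ Finset.univ) => by rw [horth i j]]
  simp [Finset.sum_ite_eq]

lemma pow_sum_smul_proj (P : Fin d → Matrix (Fin d) (Fin d) ℂ)
    (horth : ∀ i j, P i * P j = if i = j then P i else 0) (hsum : ∑ i, P i = 1)
    (m : Fin d → ℝ) (k : ℕ) :
    (∑ i, m i • P i) ^ k = ∑ i, (m i ^ k) • P i := by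
  induction k with
  | zero => simpa using hsum.symm
  | succ k ih =>
    rw [pow_succ, ih, sum_smul_proj_mul_sum_smul_proj P horth]
    exact Finset.sum_congr rfl fun i _ => by rw [pow_succ]

lemma isSelfAdjoint_sum_smul_proj (P : Fin d → Matrix (Fin d) (Fin d) ℂ)
    (hherm : ∀ i, (P i).IsHermitian) (m : Fin d → ℝ) :
    IsSelfAdjoint (∑ i, m i • P i) := by
  rw [_root_.IsSelfAdjoint, star_sum]
  refine Finset.sum_congr rfl fun i _ => ?_
  rw [star_smul, star_trivial, Matrix.star_eq_conjTranspose, (hherm i).eq]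

lemma spectrum_sum_smul_proj_subset (P : Fin d → Matrix (Fin d) (Fin d) ℂ)
    (horth : ∀ i j, P i * P j = if i = j then P i else 0) (hsum : ∑ i, P i = 1)
    (m : Fin d → ℝ) :
    spectrum ℝ (∑ i, m i • P i) ⊆ Set.range m := by
  intro μ hμ
  by_contra hrange
  rw [Set.mem_range] at hrange
  push_neg at hrange
  apply spectrum.notMem_iff.mpr _ hμ
  have halg : algebraMap ℝ (Matrix (Fin d) (Fin d) ℂ) μ - (∑ i, m i • P i)
      = ∑ i, (μ - m i) • P i := by
    rw [Algebra.algebraMap_eq_smul_one, ← hsum, Finset.smul_sum, ← Finset.sum_sub_distrib]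
    exact Finset.sum_congr rfl fun i _ => by rw [sub_smul]
  have hinv : (∑ i, (μ - m i) • P i) * (∑ i, (μ - m i)⁻¹ • P i) = 1 := by
    rw [sum_smul_proj_mul_sum_smul_proj P horth]
    rw [Finset.sum_congr rfl fun i (_ : i ∈ Finset.univ) => by
      rw [mul_inv_cancel₀ (sub_ne_zero.mpr fun h => hrange i h.symm)]]
    simpa using hsum
  have hinv' : (∑ i, (μ - m i)⁻¹ • P i) * (∑ i, (μ - m i) • P i) = 1 := by
    rw [sum_smul_proj_mul_sum_smul_proj P horth]
    rw [Finset.sum_congr rfl fun i (_ : i ∈ Finset.univ) => by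
      rw [inv_mul_cancel₀ (sub_ne_zero.mpr fun h => hrange i h.symm)]]
    simpa using hsum
  rw [halg]
  exact ⟨⟨_, _, hinv, hinv'⟩, rfl⟩

lemma aeval_sum_smul_proj (P : Fin d → Matrix (Fin d) (Fin d) ℂ)
    (horth : ∀ i j, P i * P j = if i = j then P i else 0) (hsum : ∑ i, P i = 1)
    (m : Fin d → ℝ) (q : Polynomial ℝ) :
    Polynomial.aeval (∑ i, m i • P i) q = ∑ i, (q.eval (m i)) • P i := by
  rw [Polynomial.aeval_eq_sum_range]
  rw [Finset.sum_congr rfl fun k (_ : k ∈ Finset.range (q.natDegree + 1)) => by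
    rw [pow_sum_smul_proj P horth hsum m k, Finset.smul_sum]]
  rw [Finset.sum_comm]
  refine Finset.sum_congr rfl fun i _ => ?_
  rw [Polynomial.eval_eq_sum_range, Finset.sum_smul]
  exact Finset.sum_congr rfl fun k _ => by rw [smul_smul]

lemma cfc_sum_smul_proj (P : Fin d → Matrix (Fin d) (Fin d) ℂ)
    (hherm : ∀ i, (P i).IsHermitian)
    (horth : ∀ i j, P i * P j = if i = j then P i else 0) (hsum : ∑ i, P i = 1)
    (m : Fin d → ℝ) (f : ℝ → ℝ) :
    cfc f (∑ i, m i • P i) = ∑ i, f (m i) • P i := by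
  classical
  set q : Polynomial ℝ := Lagrange.interpolate (Finset.image m Finset.univ) id f with hq
  have hqeval : ∀ i, q.eval (m i) = f (m i) := by
    intro i
    have := Lagrange.eval_interpolate_at_node (s := Finset.image m Finset.univ) (v := id)
      (i := m i) f (Set.injOn_id _) (Finset.mem_image_of_mem m (Finset.mem_univ i))
    simpa [hq] using this
  have hsa : IsSelfAdjoint (∑ i, m i • P i) := isSelfAdjoint_sum_smul_proj P hherm m
  have h1 : cfc f (∑ i, m i • P i) = cfc (fun x => q.eval x) (∑ i, m i • P i) := by
    apply cfc_congr
    intro x hx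
    obtain ⟨i, rfl⟩ := spectrum_sum_smul_proj_subset P horth hsum m hx
    exact (hqeval i).symm
  rw [h1, cfc_polynomial q _ hsa, aeval_sum_smul_proj P horth hsum]
  exact Finset.sum_congr rfl fun i _ => by rw [hqeval i]


lemma stdProj_herm (i : Fin d) : (single i i (1:ℂ)).IsHermitian := by
  ext a b
  simp [Matrix.conjTranspose_apply, single, and_comm]

lemma stdProj_orth (i j : Fin d) :
    single i i (1:ℂ) * single j j 1 = if i = j then single i i 1 else 0 := by
  by_cases h : i = j
  · subst h; rw [if_pos rfl, Matrix.single_mul_single_same, mul_one]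
  · rw [if_neg h, Matrix.single_mul_single_of_ne (h := h)]

lemma diagonal_eq_sum_smul_std (lam : Fin d → ℝ) :
    diagonal (fun i => (lam i : ℂ)) = ∑ i, lam i • single i i (1:ℂ) := by
  ext a b
  simp only [Matrix.sum_apply, Matrix.smul_apply, single, diagonal, Matrix.of_apply]
  by_cases h : a = b
  · subst h
    rw [Finset.sum_eq_single a]
    · simp
    · intro c _ hc
      rw [if_neg (fun hh : c = a ∧ c = a => hc hh.1), smul_zero]
    · intro ha; exact absurd (Finset.mem_univ a) ha
  · rw [if_neg h, Finset.sum_eq_zero]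
    intro c _
    rw [if_neg (fun hh : c = a ∧ c = b => h (hh.1 ▸ hh.2)), smul_zero]

lemma stdProj_sum : ∑ i, single i i (1:ℂ) = (1 : Matrix (Fin d) (Fin d) ℂ) := by
  have := diagonal_eq_sum_smul_std (fun _ : Fin d => (1:ℝ))
  simp only [Complex.ofReal_one, one_smul] at this
  rw [← this, ← Matrix.diagonal_one]

lemma stdProj_rank (i : Fin d) : (single i i (1:ℂ)).rank = 1 := by
  classical
  have h : single i i (1:ℂ) = diagonal (Pi.single i 1) := by
    ext a b
    simp only [single, diagonal, Matrix.of_apply, Pi.single_apply]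
    by_cases hab : a = b
    · subst hab; by_cases hia : i = a <;> simp [hia, eq_comm]
    · have : ¬ (i = a ∧ i = b) := fun ⟨h1, h2⟩ => hab (h1 ▸ h2)
      simp [hab, this]
  rw [h, Matrix.rank_diagonal]
  rw [Fintype.card_eq_one_iff]
  refine ⟨⟨i, by simp⟩, ?_⟩
  rintro ⟨j, hj⟩
  refine Subtype.ext ?_
  by_contra hji
  exact hj (Pi.single_eq_of_ne hji 1)

lemma unitary_conj_meas (U : Matrix (Fin d) (Fin d) ℂ) (hU1 : U * star U = 1)
    (hU2 : star U * U = 1) :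
    IsRankOneProjMeas (fun i => U * single i i (1:ℂ) * star U) := by
  have hdetU : IsUnit U.det := by
    apply IsUnit.of_mul_eq_one (a := U.det) (star U).det
    rw [← Matrix.det_mul, hU1, Matrix.det_one]
  have hdetUs : IsUnit (star U).det := by
    apply IsUnit.of_mul_eq_one (a := (star U).det) U.det
    rw [← Matrix.det_mul, hU2, Matrix.det_one]
  refine ⟨fun i => ?_, fun i j => ?_, ?_, fun i => ?_⟩
  · show (U * single i i 1 * star U)ᴴ = _
    rw [Matrix.star_eq_conjTranspose, Matrix.conjTranspose_mul, Matrix.conjTranspose_mul,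
      Matrix.conjTranspose_conjTranspose, (stdProj_herm i).eq, ← mul_assoc]
  · have : U * single i i (1:ℂ) * star U * (U * single j j 1 * star U)
        = U * (single i i 1 * single j j 1) * star U := by
      rw [show U * single i i (1:ℂ) * star U * (U * single j j 1 * star U)
          = U * single i i 1 * (star U * U) * single j j 1 * star U by
        noncomm_ring, hU2, mul_one, mul_assoc, mul_assoc, mul_assoc]
      rw [mul_assoc]
    rw [this, stdProj_orth i j]
    by_cases h : i = j
    · subst h; simp
    · simp [h]
  · rw [← Finset.sum_mul, ← Finset.mul_sum, stdProj_sum, mul_one, hU1]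
  · rw [Matrix.rank_mul_eq_left_of_isUnit_det (star U) (U * single i i 1) hdetUs,
      Matrix.rank_mul_eq_right_of_isUnit_det U (single i i 1) hdetU, stdProj_rank]

lemma posDef_decomp (ω : Matrix (Fin d) (Fin d) ℂ) (hω : ω.PosDef) :
    ∃ (P : Fin d → Matrix (Fin d) (Fin d) ℂ) (lam : Fin d → ℝ),
      IsRankOneProjMeas P ∧ (∀ i, 0 < lam i) ∧ ω = ∑ i, lam i • P i := by
  classical
  set U : Matrix (Fin d) (Fin d) ℂ := ↑(hω.isHermitian.eigenvectorUnitary) with hUdef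
  have hU1 : U * star U = 1 := (Matrix.mem_unitaryGroup_iff).mp (hω.isHermitian.eigenvectorUnitary).2
  have hU2 : star U * U = 1 := (Matrix.mem_unitaryGroup_iff').mp (hω.isHermitian.eigenvectorUnitary).2
  refine ⟨fun i => U * single i i 1 * star U, hω.isHermitian.eigenvalues,
    unitary_conj_meas U hU1 hU2, hω.eigenvalues_pos, ?_⟩
  conv_lhs => rw [hω.isHermitian.spectral_theorem]
  have hdiag : diagonal (RCLike.ofReal ∘ hω.isHermitian.eigenvalues)
      = ∑ i, hω.isHermitian.eigenvalues i • single i i (1:ℂ) :=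
    diagonal_eq_sum_smul_std _
  rw [hdiag, Unitary.conjStarAlgAut_apply, Finset.mul_sum, Finset.sum_mul]
  refine Finset.sum_congr rfl fun i _ => ?_
  rw [Matrix.mul_smul, Matrix.smul_mul]


lemma scalar_amgm {α : ℝ} (hα0 : 0 < α) (hα1 : α < 1) {p q m : ℝ} (hp : 0 ≤ p) (hq : 0 ≤ q)
    (hm : 0 < m) :
    p ^ α * q ^ (1 - α) ≤ α * (m * p) + (1 - α) * (m ^ (α / (α - 1)) * q) := by
  have h := Real.geom_mean_le_arith_mean2_weighted (w₁ := α) (w₂ := 1 - α) (p₁ := m * p)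
    (p₂ := m ^ (α / (α - 1)) * q) hα0.le (by linarith) (mul_nonneg hm.le hp)
    (mul_nonneg (Real.rpow_nonneg hm.le _) hq) (by ring)
  refine le_trans (le_of_eq ?_) h
  show _ = (m * p) ^ α * (m ^ (α / (α - 1)) * q) ^ (1 - α)
  have hne : α - 1 ≠ 0 := by intro h'; linarith [sub_eq_zero.mp h']
  have hc : α / (α - 1) * (1 - α) = -α := by field_simp; ring
  calc p ^ α * q ^ (1-α) = (m ^ α * m ^ (-α)) * (p ^ α * q ^ (1 - α)) := by
        rw [← Real.rpow_add hm, add_neg_cancel, Real.rpow_zero, one_mul]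
    _ = (m * p) ^ α * ((m ^ (α/(α-1))) * q) ^ (1-α) := by
        rw [Real.mul_rpow hm.le hp, Real.mul_rpow (Real.rpow_nonneg hm.le _) hq,
          ← Real.rpow_mul hm.le, hc]
        ring

lemma scalar_opt {α : ℝ} (hα0 : 0 < α) (hα1 : α < 1) {p q : ℝ} (hp : 0 < p) (hq : 0 < q) :
    α * (((p/q) ^ (α-1)) * p) + (1 - α) * ((((p/q) ^ (α-1)) ^ (α/(α-1))) * q)
      = p ^ α * q ^ (1-α) := by
  have hne : α - 1 ≠ 0 := by intro h'; linarith [sub_eq_zero.mp h']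
  have hq1 : (p/q) ^ (α-1) = p ^ (α-1) * q ^ (1-α) := by
    rw [Real.div_rpow hp.le hq.le, div_eq_mul_inv, ← Real.rpow_neg hq.le, neg_sub]
  have ht1 : (p/q) ^ (α-1) * p = p ^ α * q ^ (1-α) := by
    rw [hq1, mul_right_comm, ← Real.rpow_add_one hp.ne' (α-1), sub_add_cancel]
  have h2 : ((p/q) ^ (α-1)) ^ (α/(α-1)) = (p/q) ^ α := by
    rw [← Real.rpow_mul (div_nonneg hp.le hq.le)]
    congr 1
    field_simp
  have ht2 : ((p/q) ^ (α-1)) ^ (α/(α-1)) * q = p ^ α * q ^ (1-α) := by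
    rw [h2, Real.div_rpow hp.le hq.le, div_eq_mul_inv, ← Real.rpow_neg hq.le, mul_assoc,
      ← Real.rpow_add_one hq.ne' (-α)]
    rw [show -α + 1 = 1 - α by ring]
  rw [ht1, ht2]
  ring


lemma trace_mul_sum_smul_re (τ : Matrix (Fin d) (Fin d) ℂ) (P : Fin d → Matrix (Fin d) (Fin d) ℂ)
    (lam : Fin d → ℝ) :
    (τ * ∑ i, lam i • P i).trace.re = ∑ i, lam i * ((P i * τ).trace.re) := by
  rw [Finset.mul_sum, Matrix.trace_sum, Complex.re_sum]
  refine Finset.sum_congr rfl fun i _ => ?_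
  rw [Matrix.mul_smul, Matrix.trace_smul, trace_mul_comm τ (P i)]
  exact Complex.smul_re _ _

lemma sum_smul_proj_posDef (P : Fin d → Matrix (Fin d) (Fin d) ℂ)
    (hherm : ∀ i, (P i).IsHermitian)
    (horth : ∀ i j, P i * P j = if i = j then P i else 0) (hsum : ∑ i, P i = 1)
    (m : Fin d → ℝ) (hm : ∀ i, 0 < m i) :
    (∑ i, m i • P i).PosDef := by
  refine Matrix.PosDef.of_dotProduct_mulVec_pos (isSelfAdjoint_sum_smul_proj P hherm m) fun x hx => ?_
  have hmv : (∑ i, m i • P i) *ᵥ x = ∑ i, m i • (P i *ᵥ x) := by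
    ext k
    simp only [Matrix.mulVec, dotProduct, Matrix.sum_apply, Matrix.smul_apply,
      Finset.sum_apply, Pi.smul_apply, Finset.sum_mul, smul_mul_assoc]
    rw [Finset.sum_comm]
    exact Finset.sum_congr rfl fun i _ => by rw [Finset.smul_sum]
  have hexp : star x ⬝ᵥ (∑ i, m i • P i) *ᵥ x = ∑ i, m i • (star x ⬝ᵥ P i *ᵥ x) := by
    rw [hmv]
    simp only [dotProduct, Finset.sum_apply, Pi.smul_apply, Finset.mul_sum,
      mul_smul_comm]
    rw [Finset.sum_comm]
    exact Finset.sum_congr rfl fun i _ => (Finset.smul_sum).symm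
  have hterm : ∀ i, 0 ≤ star x ⬝ᵥ P i *ᵥ x := fun i =>
    (proj_posSemidef (hherm i) (by simpa using horth i i)).dotProduct_mulVec_nonneg x
  have htot : ∑ i, star x ⬝ᵥ P i *ᵥ x = star x ⬝ᵥ x := by
    have h1x : (1 : Matrix (Fin d) (Fin d) ℂ) *ᵥ x = ∑ i, P i *ᵥ x := by
      rw [← hsum]
      ext k
      simp only [Matrix.mulVec, dotProduct, Matrix.sum_apply, Finset.sum_apply,
        Finset.sum_mul]
      rw [Finset.sum_comm]
    have hds : star x ⬝ᵥ (∑ i, P i *ᵥ x) = ∑ i, star x ⬝ᵥ P i *ᵥ x := by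
      simp only [dotProduct, Finset.sum_apply, Finset.mul_sum]
      rw [Finset.sum_comm]
    rw [← hds, ← h1x, Matrix.one_mulVec]
  rw [hexp]
  have hex : ∃ i, 0 < star x ⬝ᵥ P i *ᵥ x := by
    by_contra hno
    push_neg at hno
    have hall : ∀ i, star x ⬝ᵥ P i *ᵥ x = 0 := by
      intro i
      by_contra h
      exact hno i ((hterm i).lt_of_ne (Ne.symm h))
    have hz : star x ⬝ᵥ x = 0 := by
      rw [← htot, Finset.sum_eq_zero fun i _ => hall i]
    exact hx (dotProduct_star_self_eq_zero.mp hz)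
  obtain ⟨i0, hi0⟩ := hex
  refine Finset.sum_pos' (fun i _ => ?_) ⟨i0, Finset.mem_univ i0, ?_⟩
  · rw [Complex.real_smul]
    exact mul_nonneg (by exact_mod_cast (hm i).le) (hterm i)
  · rw [Complex.real_smul]
    exact mul_pos (by exact_mod_cast (hm i0)) hi0
end Aux

/-- Variational expression for the projectively measured Rényi quantity `Q_α^P`, `α ∈ (0,1)`. -/
theorem measured_renyi_variational_lt_one {d : ℕ} (α : ℝ) (hα0 : 0 < α) (hα1 : α < 1)
    (ρ σ : Matrix (Fin d) (Fin d) ℂ) (hρ : ρ.PosDef) (hσ : σ.PosDef)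
    (hρ1 : ρ.trace = 1) :
    (⨅ P : {P : Fin d → Matrix (Fin d) (Fin d) ℂ // IsRankOneProjMeas P},
        ∑ i, ((P.1 i * ρ).trace.re) ^ α * ((P.1 i * σ).trace.re) ^ (1 - α))
      = ⨅ ω : {ω : Matrix (Fin d) (Fin d) ℂ // ω.PosDef},
          (α * (ρ * ω.1).trace.re + (1 - α) * (σ * mpow ω.1 (α / (α - 1))).trace.re) := by
  classical
  have hprob : ∀ (P : Fin d → Matrix (Fin d) (Fin d) ℂ), IsRankOneProjMeas P →
      ∀ (τ : Matrix (Fin d) (Fin d) ℂ), τ.PosDef → ∀ i, 0 < ((P i * τ).trace.re) := by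
    rintro P ⟨hherm, horth, hsum, hrank⟩ τ hτ i
    have hidem : P i * P i = P i := by simpa using horth i i
    have hne : P i ≠ 0 := by
      intro h0
      have h1 := hrank i
      rw [h0, Matrix.rank_zero] at h1
      exact zero_ne_one h1
    exact proj_mul_posdef_trace_re_pos (hherm i) hidem hne hτ
  set c := α / (α - 1) with hcdef
  set F : {P : Fin d → Matrix (Fin d) (Fin d) ℂ // IsRankOneProjMeas P} → ℝ :=
    fun P => ∑ i, ((P.1 i * ρ).trace.re) ^ α * ((P.1 i * σ).trace.re) ^ (1 - α) with hFdef
  set G : {ω : Matrix (Fin d) (Fin d) ℂ // ω.PosDef} → ℝ :=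
    fun ω => α * (ρ * ω.1).trace.re + (1 - α) * (σ * mpow ω.1 c).trace.re with hGdef
  haveI : Nonempty {P : Fin d → Matrix (Fin d) (Fin d) ℂ // IsRankOneProjMeas P} :=
    ⟨⟨_, ⟨stdProj_herm, stdProj_orth, stdProj_sum, stdProj_rank⟩⟩⟩
  haveI : Nonempty {ω : Matrix (Fin d) (Fin d) ℂ // ω.PosDef} := ⟨⟨1, Matrix.PosDef.one⟩⟩
  have hF0 : ∀ P, 0 ≤ F P := by
    intro P
    refine Finset.sum_nonneg fun i _ => mul_nonneg (Real.rpow_nonneg ?_ _) (Real.rpow_nonneg ?_ _)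
    · exact (hprob P.1 P.2 ρ hρ i).le
    · exact (hprob P.1 P.2 σ hσ i).le
  have hbddF : BddBelow (Set.range F) := ⟨0, by rintro _ ⟨P, rfl⟩; exact hF0 P⟩
  have hkey : ∀ ω : {ω : Matrix (Fin d) (Fin d) ℂ // ω.PosDef}, ∃ P, F P ≤ G ω := by
    rintro ⟨ω, hω⟩
    obtain ⟨P, lam, hmeas, hlam, hωeq⟩ := posDef_decomp ω hω
    obtain ⟨hherm, horth, hsum, hrank⟩ := hmeas
    have h1 : (ρ * ω).trace.re = ∑ i, lam i * ((P i * ρ).trace.re) := by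
      rw [hωeq]; exact trace_mul_sum_smul_re ρ P lam
    have hmp : mpow ω c = ∑ i, (lam i ^ c) • P i := by
      rw [hωeq, mpow]; exact cfc_sum_smul_proj P hherm horth hsum lam _
    have h2 : (σ * mpow ω c).trace.re = ∑ i, (lam i ^ c) * ((P i * σ).trace.re) := by
      rw [hmp]; exact trace_mul_sum_smul_re σ P _
    refine ⟨⟨P, ⟨hherm, horth, hsum, hrank⟩⟩, ?_⟩
    have hGv : G ⟨ω, hω⟩ = ∑ i, (α * (lam i * ((P i * ρ).trace.re))
        + (1 - α) * (lam i ^ c * ((P i * σ).trace.re))) := by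
      simp only [hGdef, h1, h2, Finset.mul_sum, ← Finset.sum_add_distrib, mul_assoc]
    rw [hGv, hFdef]
    refine Finset.sum_le_sum fun i _ => ?_
    have := scalar_amgm hα0 hα1 (p := (P i * ρ).trace.re) (q := (P i * σ).trace.re)
      (m := lam i) (hprob P ⟨hherm, horth, hsum, hrank⟩ ρ hρ i).le
      (hprob P ⟨hherm, horth, hsum, hrank⟩ σ hσ i).le (hlam i)
    simpa [mul_assoc] using this
  have hG0 : ∀ ω, 0 ≤ G ω := fun ω => le_trans (hF0 (hkey ω).choose) (hkey ω).choose_spec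
  have hbddG : BddBelow (Set.range G) := ⟨0, by rintro _ ⟨ω, rfl⟩; exact hG0 ω⟩
  apply le_antisymm
  · refine le_ciInf fun ω => ?_
    obtain ⟨P, hle⟩ := hkey ω
    exact le_trans (ciInf_le hbddF P) hle
  · refine le_ciInf fun P => ?_
    obtain ⟨PP, hPmeas⟩ := P
    obtain ⟨hherm, horth, hsum, hrank⟩ := hPmeas
    set p : Fin d → ℝ := fun i => (PP i * ρ).trace.re with hpdef
    set q : Fin d → ℝ := fun i => (PP i * σ).trace.re with hqdef
    have hp : ∀ i, 0 < p i := hprob PP ⟨hherm, horth, hsum, hrank⟩ ρ hρ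
    have hq : ∀ i, 0 < q i := hprob PP ⟨hherm, horth, hsum, hrank⟩ σ hσ
    set m : Fin d → ℝ := fun i => (p i / q i) ^ (α - 1) with hmdef
    have hm : ∀ i, 0 < m i := fun i => Real.rpow_pos_of_pos (div_pos (hp i) (hq i)) _
    set ω : Matrix (Fin d) (Fin d) ℂ := ∑ i, m i • PP i with hωdef
    have hωpos : ω.PosDef := sum_smul_proj_posDef PP hherm horth hsum m hm
    have h1 : (ρ * ω).trace.re = ∑ i, m i * p i := trace_mul_sum_smul_re ρ PP m
    have hmp : mpow ω c = ∑ i, (m i ^ c) • PP i := by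
      rw [hωdef, mpow]; exact cfc_sum_smul_proj PP hherm horth hsum m _
    have h2 : (σ * mpow ω c).trace.re = ∑ i, (m i ^ c) * q i := by
      rw [hmp]; exact trace_mul_sum_smul_re σ PP _
    have hGval : G ⟨ω, hωpos⟩ = ∑ i, (p i) ^ α * (q i) ^ (1 - α) := by
      simp only [hGdef, h1, h2, Finset.mul_sum, ← Finset.sum_add_distrib]
      exact Finset.sum_congr rfl fun i _ => scalar_opt hα0 hα1 (hp i) (hq i)
    exact le_trans (ciInf_le hbddG ⟨ω, hωpos⟩) (le_of_eq hGval)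
end

section
/- For α ∈ (1,∞) and positive definite ρ (tr ρ = 1) and σ: sup_{ω>0} [α tr(ρ ω^{1−1/α}) + (1−α) tr(σ ω)] = sup_{ω>0} tr(ρ ω^{1−1/α})^α · tr(σ ω)^{1−α}. -/
open Matrix
open scoped ComplexOrder

variable {d : ℕ}

lemma posDef_conj {P B : Matrix (Fin d) (Fin d) ℂ} (hP : P.PosDef) (hB : IsUnit B) :
    (Bᴴ * P * B).PosDef := by
  refine PosDef.of_dotProduct_mulVec_pos (isHermitian_conjTranspose_mul_mul B hP.1) fun x hx => ?_
  have hBx : B *ᵥ x ≠ 0 :=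
    (Matrix.mulVec_injective_iff_isUnit.mpr hB).ne_iff' (by simp) |>.2 hx
  simpa only [star_mulVec, dotProduct_mulVec, vecMul_vecMul] using hP.dotProduct_mulVec_pos hBx

lemma trace_re_pos [NeZero d] {M : Matrix (Fin d) (Fin d) ℂ} (hM : M.PosDef) :
    0 < M.trace.re := by
  have h : ∀ i, 0 < (M i i).re := by
    intro i
    have := hM.dotProduct_mulVec_pos (x := Pi.single i 1) (by simp [Function.ne_iff])
    simp only [mulVec_single, dotProduct, Pi.star_apply, Pi.single_apply] at this
    have h2 : 0 < M i i := by simpa using this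
    exact by rw [Complex.lt_def] at h2; exact h2.1
  have : M.trace.re = ∑ i, (M i i).re := by
    simp [Matrix.trace, Matrix.diag, Complex.re_sum]
  rw [this]
  exact Finset.sum_pos (fun i _ => h i) ⟨⟨0, Nat.pos_of_ne_zero (NeZero.ne d)⟩, Finset.mem_univ _⟩

open scoped MatrixOrder in
lemma trace_mul_re_pos [NeZero d] {P Q : Matrix (Fin d) (Fin d) ℂ}
    (hP : P.PosDef) (hQ : Q.PosDef) : 0 < (P * Q).trace.re := by
  set S := CFC.sqrt Q with hSdef
  have hS : S.PosSemidef := (CFC.sqrt_nonneg Q).posSemidef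
  have hSS : S * S = Q := CFC.sqrt_mul_sqrt_self Q hQ.posSemidef.nonneg
  have hSunit : IsUnit S := by
    have : IsUnit (S.det * S.det) := by
      rw [← det_mul, hSS]; exact hQ.det_pos.ne'.isUnit
    exact (isUnit_iff_isUnit_det _).2 (isUnit_of_mul_isUnit_left this)
  have hconj : (Sᴴ * P * S).PosDef := posDef_conj hP hSunit
  have htr : (P * Q).trace = (Sᴴ * P * S).trace := by
    rw [hS.isHermitian.eq, ← hSS, ← mul_assoc, trace_mul_comm, ← mul_assoc]
  rw [htr]
  exact trace_re_pos hconj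

section Aux
variable {d : ℕ}
lemma spectrum_pos {ω : Matrix (Fin d) (Fin d) ℂ} (hω : ω.PosDef) :
    ∀ x ∈ spectrum ℝ ω, 0 < x := by
  intro x hx
  rw [hω.1.spectrum_real_eq_range_eigenvalues] at hx
  obtain ⟨i, rfl⟩ := hx
  exact hω.eigenvalues_pos i

lemma contOn_rpow {s : Set ℝ} (hs : ∀ x ∈ s, 0 < x) (p : ℝ) :
    ContinuousOn (fun t : ℝ => t ^ p) s := fun x hx =>
  (Real.continuousAt_rpow_const x p (Or.inl (hs x hx).ne')).continuousWithinAt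

lemma posDef_mpow {ω : Matrix (Fin d) (Fin d) ℂ} (hω : ω.PosDef) (p : ℝ) :
    (mpow ω p).PosDef := by
  have hH : ω.IsHermitian := hω.1
  rw [mpow, hH.cfc_eq, Matrix.IsHermitian.cfc]
  have hdiag : (diagonal (RCLike.ofReal ∘ (fun t : ℝ => t ^ p) ∘ hH.eigenvalues) :
      Matrix (Fin d) (Fin d) ℂ).PosDef := by
    rw [posDef_diagonal_iff]
    intro i
    simpa using Complex.zero_lt_real.2 (Real.rpow_pos_of_pos (hω.eigenvalues_pos i) p)
  have hU : IsUnit (star hH.eigenvectorUnitary : Matrix (Fin d) (Fin d) ℂ) :=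
    IsUnit.star ⟨Unitary.toUnits hH.eigenvectorUnitary, rfl⟩
  simpa [← Matrix.star_eq_conjTranspose, star_star] using posDef_conj hdiag hU

lemma coe_smul_mat (r : ℝ) (M : Matrix (Fin d) (Fin d) ℂ) : (r : ℂ) • M = r • M := by
  ext i j
  simp [Complex.real_smul]

lemma mpow_smul {ω : Matrix (Fin d) (Fin d) ℂ} (hω : ω.PosDef) {c : ℝ} (hc : 0 < c) (p : ℝ) :
    mpow ((c : ℂ) • ω) p = ((c ^ p : ℝ) : ℂ) • mpow ω p := by
  have hsa : IsSelfAdjoint ω := hω.1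
  have hsp := spectrum_pos hω
  rw [coe_smul_mat, coe_smul_mat, mpow, mpow]
  rw [← cfc_comp_smul c (fun t : ℝ => t ^ p) ω
    (contOn_rpow (by rintro x ⟨y, hy, rfl⟩; exact smul_pos hc (hsp y hy)) p) hsa]
  rw [show (fun t : ℝ => (c • t) ^ p) = (fun t : ℝ => (c * t) ^ p) from rfl]
  rw [cfc_congr (g := fun t : ℝ => c ^ p * t ^ p)
    (fun t ht => Real.mul_rpow hc.le (hsp t ht).le)]
  exact cfc_const_mul (c ^ p) (fun t : ℝ => t ^ p) ω (contOn_rpow hsp p)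

lemma posDef_smul {ω : Matrix (Fin d) (Fin d) ℂ} (hω : ω.PosDef) {c : ℝ} (hc : 0 < c) :
    ((c : ℂ) • ω).PosDef := by
  refine PosDef.of_dotProduct_mulVec_pos ?_ fun x hx => ?_
  · unfold Matrix.IsHermitian
    rw [conjTranspose_smul, hω.1.eq]
    congr 1
    simp
  · have h := hω.dotProduct_mulVec_pos hx
    rw [smul_mulVec, dotProduct_smul, smul_eq_mul]
    exact mul_pos (Complex.zero_lt_real.2 hc) h


lemma bound_lemma {A B α : ℝ} (hA : 0 < A) (hB : 0 < B) (hα : 1 < α) :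
    α * A + (1 - α) * B ≤ A ^ α * B ^ (1 - α) := by
  have hAB : (0:ℝ) < A / B := div_pos hA hB
  have hs : (-1 : ℝ) ≤ A / B - 1 := by linarith
  have h := one_add_mul_self_le_rpow_one_add hs hα.le
  rw [add_sub_cancel] at h
  have h2 : B * (1 + α * (A / B - 1)) ≤ B * (A / B) ^ α :=
    mul_le_mul_of_nonneg_left h hB.le
  have e1 : B * (1 + α * (A / B - 1)) = α * A + (1 - α) * B := by
    field_simp
    ring
  have e2 : B * (A / B) ^ α = A ^ α * B ^ (1 - α) := by
    rw [Real.div_rpow hA.le hB.le, Real.rpow_sub hB, Real.rpow_one]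
    field_simp
  rw [e1, e2] at h2
  exact h2

lemma attain_eq {A B α : ℝ} (hA : 0 < A) (hB : 0 < B) (hα : 1 < α) :
    α * (((A / B) ^ α) ^ (1 - 1 / α) * A) + (1 - α) * ((A / B) ^ α * B)
      = A ^ α * B ^ (1 - α) := by
  have hα0 : α ≠ 0 := by positivity
  have hAB : (0:ℝ) < A / B := div_pos hA hB
  have h1 : ((A / B) ^ α) ^ (1 - 1 / α) = (A / B) ^ (α - 1) := by
    rw [← Real.rpow_mul hAB.le]
    congr 1
    field_simp
  have h2 : (A / B) ^ α * B = A ^ α * B ^ (1 - α) := by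
    rw [Real.div_rpow hA.le hB.le, Real.rpow_sub hB, Real.rpow_one]
    field_simp
  have h3 : (A / B) ^ (α - 1) * A = A ^ α * B ^ (1 - α) := by
    have hBpow : B ^ (1 - α) = (B ^ (α - 1))⁻¹ := by
      rw [show (1 - α) = -(α - 1) by ring, Real.rpow_neg hB.le]
    rw [Real.div_rpow hA.le hB.le, Real.rpow_sub hA, Real.rpow_one, hBpow]
    field_simp
  rw [h1, h2, h3]
  ring

lemma iSup_eq_of_le_of_attained {ι : Type*} [Nonempty ι] (f g : ι → ℝ)
    (h1 : ∀ i, f i ≤ g i) (h2 : ∀ i, ∃ j, f j = g i) : (⨆ i, f i) = ⨆ i, g i := by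
  by_cases hbg : BddAbove (Set.range g)
  · have hbf : BddAbove (Set.range f) := by
      obtain ⟨c, hc⟩ := hbg
      exact ⟨c, by rintro - ⟨i, rfl⟩; exact (h1 i).trans (hc (Set.mem_range_self i))⟩
    apply le_antisymm
    · exact ciSup_le fun i => (h1 i).trans (le_ciSup hbg i)
    · refine ciSup_le fun i => ?_
      obtain ⟨j, hj⟩ := h2 i
      exact hj ▸ le_ciSup hbf j
  · have hbf : ¬ BddAbove (Set.range f) := by
      intro hbf
      apply hbg
      obtain ⟨c, hc⟩ := hbf
      refine ⟨c, ?_⟩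
      rintro - ⟨i, rfl⟩
      obtain ⟨j, hj⟩ := h2 i
      exact hj ▸ hc (Set.mem_range_self j)
    rw [Real.iSup_of_not_bddAbove hbf, Real.iSup_of_not_bddAbove hbg]

end Aux

set_option maxHeartbeats 1000000 in
/-- Equality of the two variational expressions (sum form vs product form), `α > 1`. -/
theorem renyi_variational_product_form_gt_one {d : ℕ} (α : ℝ) (hα : 1 < α)
    (ρ σ : Matrix (Fin d) (Fin d) ℂ) (hρ : ρ.PosDef) (hσ : σ.PosDef)
    (hρ1 : ρ.trace = 1) :
    (⨆ ω : {ω : Matrix (Fin d) (Fin d) ℂ // ω.PosDef},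
        (α * (ρ * mpow ω.1 (1 - 1 / α)).trace.re + (1 - α) * (σ * ω.1).trace.re))
      = ⨆ ω : {ω : Matrix (Fin d) (Fin d) ℂ // ω.PosDef},
          (((ρ * mpow ω.1 (1 - 1 / α)).trace.re) ^ α * ((σ * ω.1).trace.re) ^ (1 - α)) := by
  haveI hd : NeZero d := by
    refine ⟨fun h => ?_⟩
    subst h
    simp [Matrix.trace] at hρ1
  haveI : Nonempty {ω : Matrix (Fin d) (Fin d) ℂ // ω.PosDef} := ⟨⟨ρ, hρ⟩⟩
  set q : ℝ := 1 - 1 / α with hq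
  set F : {ω : Matrix (Fin d) (Fin d) ℂ // ω.PosDef} → ℝ :=
    fun ω => α * (ρ * mpow ω.1 q).trace.re + (1 - α) * (σ * ω.1).trace.re with hF
  set G : {ω : Matrix (Fin d) (Fin d) ℂ // ω.PosDef} → ℝ :=
    fun ω => ((ρ * mpow ω.1 q).trace.re) ^ α * ((σ * ω.1).trace.re) ^ (1 - α) with hG
  have hApos : ∀ ω : {ω : Matrix (Fin d) (Fin d) ℂ // ω.PosDef},
      0 < (ρ * mpow ω.1 q).trace.re := fun ω => trace_mul_re_pos hρ (posDef_mpow ω.2 q)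
  have hBpos : ∀ ω : {ω : Matrix (Fin d) (Fin d) ℂ // ω.PosDef},
      0 < (σ * ω.1).trace.re := fun ω => trace_mul_re_pos hσ ω.2
  have h1 : ∀ ω, F ω ≤ G ω := fun ω => bound_lemma (hApos ω) (hBpos ω) hα
  have h2 : ∀ ω, ∃ ω', F ω' = G ω := by
    intro ω
    set A := (ρ * mpow ω.1 q).trace.re
    set B := (σ * ω.1).trace.re
    have hA := hApos ω
    have hB := hBpos ω
    set c : ℝ := (A / B) ^ α with hc
    have hcpos : 0 < c := Real.rpow_pos_of_pos (div_pos hA hB) α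
    refine ⟨⟨(c : ℂ) • ω.1, posDef_smul ω.2 hcpos⟩, ?_⟩
    have e1 : (ρ * mpow ((c : ℂ) • ω.1) q).trace.re = c ^ q * A := by
      rw [mpow_smul ω.2 hcpos q, mul_smul_comm, trace_smul, smul_eq_mul,
        Complex.re_ofReal_mul]
    have e2 : (σ * ((c : ℂ) • ω.1)).trace.re = c * B := by
      rw [mul_smul_comm, trace_smul, smul_eq_mul, Complex.re_ofReal_mul]
    show α * (ρ * mpow ((c : ℂ) • ω.1) q).trace.re
        + (1 - α) * (σ * ((c : ℂ) • ω.1)).trace.re = G ω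
    rw [e1, e2]
    show α * (c ^ q * A) + (1 - α) * (c * B) = A ^ α * B ^ (1 - α)
    rw [hc, hq]
    exact attain_eq hA hB hα
  exact iSup_eq_of_le_of_attained F G h1 h2
end
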